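/- The union of any set of plump ordinals is a plump ordinal. -/

import Mathlib

/-- An ordinal: a transitive set of transitive sets. -/
def ZFSet.IsOrd (x : ZFSet) : Prop :=
  x.IsTransitive ∧ ∀ y ∈ x, ZFSet.IsTransitive y

/-- `γ` is plump relative to `α`: for all `δ ∈ γ` and `ε ∈ α` with `ε ⊆ δ`, `ε ∈ γ`. -/
def ZFSet.relpl (α γ : ZFSet) : Prop :=
  ∀ δ ∈ γ, ∀ ε ∈ α, ε ⊆ δ → ε ∈ γ

/-- `α` is a plump ordinal. -/
def ZFSet.PlOrd (α : ZFSet) : Prop :=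
  α.IsOrd ∧ ∀ β ∈ α, ∀ γ : ZFSet, γ ⊆ β → α.relpl γ →
    γ ∈ α ∧ ∀ δ ∈ α, β ∈ δ → γ ∈ δ

theorem sUnion_plOrd (s : ZFSet) (hs : ∀ α ∈ s, ZFSet.PlOrd α) :
    ZFSet.PlOrd (ZFSet.sUnion s) := by
  have hsub : ∀ α ∈ s, α ⊆ (ZFSet.sUnion s : ZFSet) := fun α hα x hx => ZFSet.mem_sUnion.2 ⟨α, hα, hx⟩
  have hrel : ∀ γ : ZFSet, (ZFSet.sUnion s : ZFSet).relpl γ → ∀ α ∈ s, α.relpl γ := by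
    intro γ hγ α hα δ hδ ε hε hεδ
    exact hγ δ hδ ε (hsub α hα hε) hεδ
  constructor
  · constructor
    · intro y hy
      obtain ⟨α, hα, hyα⟩ := ZFSet.mem_sUnion.1 hy
      exact fun z hz => hsub α hα (((hs α hα).1.1 y hyα) hz)
    · intro y hy
      obtain ⟨α, hα, hyα⟩ := ZFSet.mem_sUnion.1 hy
      exact (hs α hα).1.2 y hyα
  · intro β hβ γ hγβ hγrel
    obtain ⟨α, hα, hβα⟩ := ZFSet.mem_sUnion.1 hβ
    constructor
    · exact hsub α hα ((hs α hα).2 β hβα γ hγβ (hrel γ hγrel α hα)).1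
    · intro δ hδ hβδ
      obtain ⟨α', hα', hδα'⟩ := ZFSet.mem_sUnion.1 hδ
      have hβα' : β ∈ α' := (hs α' hα').1.1 δ hδα' hβδ
      exact ((hs α' hα').2 β hβα' γ hγβ (hrel γ hγrel α' hα')).2 δ hδα' hβδ
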